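/- arXiv:1402.1754 — 2 statements merged into one kernel-verified Lean document; each statement's English description precedes it below -/
import Mathlib

section
/- Let b > 1, c ∈ [1,2], h ∈ (0,1], and suppose a ≥ max( h(1/b + c)/(c+3), h(b+1)/((c+3)b) ). With l = N^a and λ = (log N / N)^{h/(c+3)}, the quantity r(l,N,λ) = log^h(l)/(N^h λ^3) + λ^c + 1/(l² λ) + 1/(l λ^{1/b}) is O((log N / N)^{hc/(c+3)}) as N → ∞, and the constraint l ≥ λ^{−1/b − 1} holds for large N. -/
open Filter Real

/-- Rate analysis for the first row of the convergence table.  Let `b > 1`, `c ∈ [1,2]`,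
`h ∈ (0,1]`, and `a ≥ max( h(1/b + c)/(c+3), h(b+1)/((c+3)b) )`.  With `l = N^a` and
`λ = (log N / N)^{h/(c+3)}`, the rate function
`r(l,N,λ) = log^h(l)/(N^h λ³) + λ^c + 1/(l² λ) + 1/(l λ^{1/b})` is
`O((log N / N)^{hc/(c+3)})` as `N → ∞`, and the constraint `l ≥ λ^{−1/b−1}` holds for
large `N`. -/
theorem stmt16 (b c h a : ℝ) (hb : 1 < b) (hc : 1 ≤ c) (hc' : c ≤ 2)
    (hh : 0 < h) (hh' : h ≤ 1)
    (ha : max (h * (1 / b + c) / (c + 3)) (h * (b + 1) / ((c + 3) * b)) ≤ a)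
    (l lam r : ℕ → ℝ)
    (hl : ∀ N : ℕ, l N = (N : ℝ) ^ a)
    (hlam : ∀ N : ℕ, lam N = (Real.log N / N) ^ (h / (c + 3)))
    (hr : ∀ N : ℕ, r N =
      (Real.log (l N)) ^ h / ((N : ℝ) ^ h * lam N ^ (3 : ℝ)) + lam N ^ c +
        1 / (l N ^ (2 : ℝ) * lam N) + 1 / (l N * lam N ^ (1 / b))) :
    (∃ C : ℝ, 0 < C ∧
        ∀ᶠ N : ℕ in atTop, r N ≤ C * (Real.log N / N) ^ (h * c / (c + 3))) ∧
      ∀ᶠ N : ℕ in atTop, lam N ^ (-1 / b - 1) ≤ l N := by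
  have hb0 : (0:ℝ) < b := by linarith
  have hc3 : (0:ℝ) < c + 3 := by linarith
  have h1b : (0:ℝ) < 1 / b := by positivity
  have ha1 : h * (1 / b + c) / (c + 3) ≤ a := le_trans (le_max_left _ _) ha
  have ha2 : h * (b + 1) / ((c + 3) * b) ≤ a := le_trans (le_max_right _ _) ha
  have ha0 : 0 < a := lt_of_lt_of_le (by positivity) ha1
  set t : ℝ := h / (c + 3) with ht_def
  set p : ℝ := h * c / (c + 3) with hp_def
  have ht0 : 0 < t := by positivity
  have hp0 : 0 < p := by positivity
  -- exponent inequalities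
  have hpt : p + t ≤ 2 * a := by
    have e : 2 * (h * (1 / b + c) / (c + 3)) - (p + t) = h * (2 / b + c - 1) / (c + 3) := by
      rw [hp_def, ht_def]; field_simp; try ring; try tauto
    have h2b : (0:ℝ) < 2 / b := by positivity
    have hnn : 0 ≤ h * (2 / b + c - 1) / (c + 3) :=
      div_nonneg (mul_nonneg hh.le (by linarith)) hc3.le
    linarith [e ▸ hnn]
  have hptb : p + t * (1 / b) ≤ a := by
    have e : h * (1 / b + c) / (c + 3) = p + t * (1 / b) := by
      rw [hp_def, ht_def]; field_simp; try ring; try tauto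
    linarith [e ▸ ha1]
  have hcon : t * (1 / b + 1) ≤ a := by
    have e : h * (b + 1) / ((c + 3) * b) = t * (1 / b + 1) := by
      rw [ht_def]; field_simp; try ring; try tauto
    linarith [e ▸ ha2]
  have hsplit : p + t * 3 = h := by
    rw [hp_def, ht_def]; field_simp; try ring; try tauto
  constructor
  · refine ⟨a ^ h + 3, by positivity, ?_⟩
    filter_upwards [eventually_ge_atTop 3] with N hN
    have hN3 : (3:ℝ) ≤ (N:ℝ) := by exact_mod_cast hN
    have hN0 : (0:ℝ) < (N:ℝ) := by linarith
    have hN1 : (1:ℝ) ≤ (N:ℝ) := by linarith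
    have hL1 : 1 ≤ Real.log N := (Real.le_log_iff_exp_le hN0).mpr
      (by linarith [Real.exp_one_lt_d9])
    set x : ℝ := Real.log N / (N:ℝ) with hx_def
    have hx0 : 0 < x := div_pos (by linarith) hN0
    have hxinv : ((N:ℝ))⁻¹ ≤ x := by
      rw [hx_def, inv_eq_one_div]
      gcongr
    have key : ∀ e1 e2 : ℝ, 0 ≤ e1 → e1 ≤ e2 → ((N:ℝ)) ^ (-e2) ≤ x ^ e1 := by
      intro e1 e2 he1 he12
      calc ((N:ℝ)) ^ (-e2) ≤ ((N:ℝ)) ^ (-e1) :=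
            Real.rpow_le_rpow_of_exponent_le hN1 (by linarith)
        _ = (((N:ℝ))⁻¹) ^ e1 := by
            rw [Real.inv_rpow hN0.le, ← Real.rpow_neg hN0.le]
        _ ≤ x ^ e1 := Real.rpow_le_rpow (by positivity) hxinv he1
    rw [hr, hl, hlam]
    have hlamx : (Real.log N / (N:ℝ)) ^ t = x ^ t := rfl
    rw [hlamx]
    have hlog : Real.log (N:ℝ) = x * N := by
      rw [hx_def, div_mul_cancel₀ _ hN0.ne']
    have hxh : x ^ p * x ^ (t * 3) = x ^ h := by
      rw [← Real.rpow_add hx0, hsplit]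
    -- term 1
    have T1 : (Real.log ((N:ℝ) ^ a)) ^ h / ((N:ℝ) ^ h * (x ^ t) ^ (3:ℝ)) = a ^ h * x ^ p := by
      rw [Real.log_rpow hN0, ← Real.rpow_mul hx0.le, div_eq_iff (by positivity)]
      calc (a * Real.log (N:ℝ)) ^ h = (a * (x * N)) ^ h := by rw [hlog]
        _ = a ^ h * (x ^ h * (N:ℝ) ^ h) := by
            rw [Real.mul_rpow ha0.le (by positivity), Real.mul_rpow hx0.le hN0.le]
        _ = a ^ h * x ^ p * ((N:ℝ) ^ h * x ^ (t * 3)) := by rw [← hxh]; ring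
    rw [T1]
    -- term 2
    have T2 : (x ^ t) ^ c = x ^ p := by
      rw [← Real.rpow_mul hx0.le]
      congr 1
      rw [ht_def, hp_def]; field_simp; try ring; try tauto
    rw [T2]
    -- term 3
    have T3 : 1 / (((N:ℝ) ^ a) ^ (2:ℝ) * x ^ t) ≤ x ^ p := by
      rw [← Real.rpow_mul hN0.le, div_le_iff₀ (by positivity)]
      calc (1:ℝ) = ((N:ℝ)) ^ (-(a * 2)) * ((N:ℝ)) ^ (a * 2) := by
            rw [← Real.rpow_add hN0]; norm_num
        _ ≤ x ^ (p + t) * ((N:ℝ)) ^ (a * 2) :=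
            mul_le_mul_of_nonneg_right
              (key (p + t) (a * 2) (by positivity) (by linarith)) (by positivity)
        _ = x ^ p * (((N:ℝ)) ^ (a * 2) * x ^ t) := by
            rw [Real.rpow_add hx0]; ring
    -- term 4
    have T4 : 1 / ((N:ℝ) ^ a * (x ^ t) ^ (1 / b)) ≤ x ^ p := by
      rw [← Real.rpow_mul hx0.le, div_le_iff₀ (by positivity)]
      calc (1:ℝ) = ((N:ℝ)) ^ (-a) * ((N:ℝ)) ^ a := by
            rw [← Real.rpow_add hN0]; norm_num
        _ ≤ x ^ (p + t * (1 / b)) * ((N:ℝ)) ^ a :=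
            mul_le_mul_of_nonneg_right
              (key (p + t * (1 / b)) a (by positivity) hptb) (by positivity)
        _ = x ^ p * (((N:ℝ)) ^ a * x ^ (t * (1 / b))) := by
            rw [Real.rpow_add hx0]; ring
    have hx0p : 0 < x ^ p := by positivity
    linarith [T3, T4]
  · filter_upwards [eventually_ge_atTop 3] with N hN
    have hN3 : (3:ℝ) ≤ (N:ℝ) := by exact_mod_cast hN
    have hN0 : (0:ℝ) < (N:ℝ) := by linarith
    have hN1 : (1:ℝ) ≤ (N:ℝ) := by linarith
    have hL1 : 1 ≤ Real.log N := (Real.le_log_iff_exp_le hN0).mpr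
      (by linarith [Real.exp_one_lt_d9])
    set x : ℝ := Real.log N / (N:ℝ) with hx_def
    have hx0 : 0 < x := div_pos (by linarith) hN0
    have hxinv : ((N:ℝ))⁻¹ ≤ x := by
      rw [hx_def, inv_eq_one_div]
      gcongr
    rw [hl, hlam]
    have hlamx : (Real.log N / (N:ℝ)) ^ t = x ^ t := rfl
    rw [hlamx, ← Real.rpow_mul hx0.le]
    have he : t * (-1 / b - 1) ≤ 0 := by
      have h1 : (0:ℝ) ≤ t * (1 / b + 1) := by positivity
      have h2 : t * (-1 / b - 1) = -(t * (1 / b + 1)) := by ring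
      rw [h2]; linarith
    calc x ^ (t * (-1 / b - 1)) ≤ (((N:ℝ))⁻¹) ^ (t * (-1 / b - 1)) :=
          Real.rpow_le_rpow_of_nonpos (by positivity) hxinv he
      _ = ((N:ℝ)) ^ (-(t * (-1 / b - 1))) := by
          rw [Real.inv_rpow hN0.le, ← Real.rpow_neg hN0.le]
      _ ≤ ((N:ℝ)) ^ a := by
          refine Real.rpow_le_rpow_of_exponent_le hN1 ?_
          have h2 : -(t * (-1 / b - 1)) = t * (1 / b + 1) := by ring
          rw [h2]; exact hcon
end

section
/- Let T, T_x be positive self-adjoint bounded operators on H with ‖(T − T_x)(T + λ)⁻¹‖ ≤ 1/2 and λ > 0. Then ‖√T (T_x + λ)⁻¹‖ ≤ 2 ‖√T (T + λ)⁻¹‖ ≤ 2/(2√λ) = 1/√λ; more generally, if additionally ‖(T_x − T_{x̂})(T_x+λ)⁻¹‖ ≤ 1/2, then ‖√T (T_{x̂} + λ)⁻¹‖ ≤ 2/√λ. -/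
open scoped RealInnerProductSpace

private lemma aux_norm_le_two {R : Type*} [NormedRing R] {A B : R}
    (h1 : ‖(1 : R)‖ ≤ 1) (hA : ‖A‖ ≤ 1 / 2) (hB : B = A * B + 1) : ‖B‖ ≤ 2 := by
  have h2 : ‖B‖ ≤ ‖A‖ * ‖B‖ + ‖(1 : R)‖ := by
    conv_lhs => rw [hB]
    exact (norm_add_le _ _).trans (add_le_add (norm_mul_le _ _) le_rfl)
  nlinarith [norm_nonneg B]

set_option maxHeartbeats 800000 in
/-- Let `T`, `T_x`, `T_x̂` be positive self-adjoint bounded operators on `H` and `λ > 0`, with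
`‖(T − T_x)(T + λ)⁻¹‖ ≤ 1/2`.  Then `‖√T (T_x + λ)⁻¹‖ ≤ 2 ‖√T (T + λ)⁻¹‖ ≤ 1/√λ`; moreover,
if additionally `‖(T_x − T_x̂)(T_x + λ)⁻¹‖ ≤ 1/2`, then `‖√T (T_x̂ + λ)⁻¹‖ ≤ 2/√λ`. -/
theorem stmt18 {H : Type*} [NormedAddCommGroup H] [InnerProductSpace ℝ H] [CompleteSpace H]
    (T Tx Txh sqrtT Rinv RinvX RinvXh : H →L[ℝ] H)
    (hT : IsSelfAdjoint T) (hTpos : ∀ f : H, 0 ≤ ⟪T f, f⟫)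
    (hTx : IsSelfAdjoint Tx) (hTxpos : ∀ f : H, 0 ≤ ⟪Tx f, f⟫)
    (hTxh : IsSelfAdjoint Txh) (hTxhpos : ∀ f : H, 0 ≤ ⟪Txh f, f⟫)
    (hs : IsSelfAdjoint sqrtT) (hspos : ∀ f : H, 0 ≤ ⟪sqrtT f, f⟫)
    (hsq : sqrtT * sqrtT = T)
    (lam : ℝ) (hlam : 0 < lam)
    (hinv₁ : (T + lam • (1 : H →L[ℝ] H)) * Rinv = 1)
    (hinv₂ : Rinv * (T + lam • (1 : H →L[ℝ] H)) = 1)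
    (hinvX₁ : (Tx + lam • (1 : H →L[ℝ] H)) * RinvX = 1)
    (hinvX₂ : RinvX * (Tx + lam • (1 : H →L[ℝ] H)) = 1)
    (hinvXh₁ : (Txh + lam • (1 : H →L[ℝ] H)) * RinvXh = 1)
    (hinvXh₂ : RinvXh * (Txh + lam • (1 : H →L[ℝ] H)) = 1)
    (hpert : ‖(T - Tx) * Rinv‖ ≤ 1 / 2) :
    (‖sqrtT * RinvX‖ ≤ 2 * ‖sqrtT * Rinv‖ ∧ 2 * ‖sqrtT * Rinv‖ ≤ 1 / Real.sqrt lam) ∧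
      (‖(Tx - Txh) * RinvX‖ ≤ 1 / 2 → ‖sqrtT * RinvXh‖ ≤ 2 / Real.sqrt lam) := by
  have h1 : ‖(1 : H →L[ℝ] H)‖ ≤ 1 := ContinuousLinearMap.norm_id_le
  set s := Real.sqrt lam with hsdef
  have hspos' : 0 < s := Real.sqrt_pos.mpr hlam
  have hs2 : s ^ 2 = lam := Real.sq_sqrt hlam.le
  -- core bound : ‖sqrtT * Rinv‖ ≤ 1/(2 s)
  have hsym : LinearMap.IsSymmetric (sqrtT : H →ₗ[ℝ] H) :=
    (ContinuousLinearMap.isSelfAdjoint_iff_isSymmetric.mp hs)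
  have hcore : ‖sqrtT * Rinv‖ ≤ 1 / (2 * s) := by
    apply ContinuousLinearMap.opNorm_le_bound _ (by positivity)
    intro f
    set g := Rinv f with hg
    have hfg : T g + lam • g = f := by
      have := congrArg (fun (S : H →L[ℝ] H) => S f) hinv₁
      simpa [ContinuousLinearMap.mul_apply, ContinuousLinearMap.add_apply] using this
    have hsg : ⟪T g, g⟫ = ‖sqrtT g‖ ^ 2 := by
      rw [← hsq]
      have h := hsym (sqrtT g) g
      simp only [ContinuousLinearMap.mul_apply, ContinuousLinearMap.coe_coe] at h ⊢
      rw [h, real_inner_comm, real_inner_self_eq_norm_sq]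
    have hCS : ⟪T g, g⟫ ≤ ‖T g‖ * ‖g‖ := real_inner_le_norm _ _
    have hexp : ‖f‖ ^ 2 = ‖T g‖ ^ 2 + 2 * (lam * ⟪T g, g⟫) + lam ^ 2 * ‖g‖ ^ 2 := by
      rw [← hfg, norm_add_sq_real, real_inner_smul_right, norm_smul, Real.norm_eq_abs,
        abs_of_pos hlam]
      ring
    have hkey : 4 * lam * ‖sqrtT g‖ ^ 2 ≤ ‖f‖ ^ 2 := by
      nlinarith [sq_nonneg (‖T g‖ - lam * ‖g‖), hCS, hlam, hsg, hexp,
        mul_le_mul_of_nonneg_left hCS hlam.le]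
    have : ‖(sqrtT * Rinv) f‖ = ‖sqrtT g‖ := by
      simp [ContinuousLinearMap.mul_apply, hg]
    rw [this, div_mul_eq_mul_div, one_mul, le_div_iff₀ (by positivity)]
    nlinarith [norm_nonneg f, norm_nonneg (sqrtT g), hspos', hs2, hkey,
      mul_nonneg hspos'.le (norm_nonneg (sqrtT g))]
  -- B := (T+λ)RinvX has norm ≤ 2
  have hAB : ((T - Tx) * Rinv) * ((T + lam • (1 : H →L[ℝ] H)) * RinvX)
      = (T - Tx) * RinvX := by
    rw [mul_assoc (T - Tx) Rinv, ← mul_assoc Rinv, hinv₂, one_mul]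
  have hBeq : (T + lam • (1 : H →L[ℝ] H)) * RinvX
      = ((T - Tx) * Rinv) * ((T + lam • (1 : H →L[ℝ] H)) * RinvX) + 1 := by
    rw [hAB]
    conv_rhs => rw [← hinvX₁]
    rw [← add_mul]
    congr 1
    abel
  have hBle : ‖(T + lam • (1 : H →L[ℝ] H)) * RinvX‖ ≤ 2 := aux_norm_le_two h1 hpert hBeq
  have hsplit : sqrtT * RinvX = (sqrtT * Rinv) * ((T + lam • (1 : H →L[ℝ] H)) * RinvX) := by
    rw [mul_assoc sqrtT Rinv, ← mul_assoc Rinv, hinv₂, one_mul]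
  have part1 : ‖sqrtT * RinvX‖ ≤ 2 * ‖sqrtT * Rinv‖ := by
    rw [hsplit]
    exact (norm_mul_le _ _).trans (by nlinarith [norm_nonneg (sqrtT * Rinv)])
  have part2 : 2 * ‖sqrtT * Rinv‖ ≤ 1 / s := by
    have h2s : (2 : ℝ) * (1 / (2 * s)) = 1 / s := by field_simp
    linarith
  refine ⟨⟨part1, part2⟩, fun hpert2 => ?_⟩
  have hAB2 : ((Tx - Txh) * RinvX) * ((Tx + lam • (1 : H →L[ℝ] H)) * RinvXh)
      = (Tx - Txh) * RinvXh := by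
    rw [mul_assoc (Tx - Txh) RinvX, ← mul_assoc RinvX, hinvX₂, one_mul]
  have hBeq2 : (Tx + lam • (1 : H →L[ℝ] H)) * RinvXh
      = ((Tx - Txh) * RinvX) * ((Tx + lam • (1 : H →L[ℝ] H)) * RinvXh) + 1 := by
    rw [hAB2]
    conv_rhs => rw [← hinvXh₁]
    rw [← add_mul]
    congr 1
    abel
  have hBle2 : ‖(Tx + lam • (1 : H →L[ℝ] H)) * RinvXh‖ ≤ 2 := aux_norm_le_two h1 hpert2 hBeq2
  have hsplit2 : sqrtT * RinvXh = (sqrtT * RinvX) * ((Tx + lam • (1 : H →L[ℝ] H)) * RinvXh) := by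
    rw [mul_assoc sqrtT RinvX, ← mul_assoc RinvX, hinvX₂, one_mul]
  have hfin : ‖sqrtT * RinvXh‖ ≤ ‖sqrtT * RinvX‖ * 2 := by
    rw [hsplit2]
    exact (norm_mul_le _ _).trans (by nlinarith [norm_nonneg (sqrtT * RinvX)])
  have h2s : (2 : ℝ) / s = 2 * (1 / s) := by ring
  nlinarith [norm_nonneg (sqrtT * RinvX), norm_nonneg (sqrtT * Rinv)]
end
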